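/- (Theorem 6, computation) For the profile on n ≥ 4 alternatives with maximal wins X_1→X_3, X_3→X_4, X_2→X_4 and no other comparisons, let ρ be any weak order and ρ' the weak order obtained by interchanging X_1 and X_2. Then the objective of WQA(R, C'_5) satisfies f_5(ρ) = (ρ(1) + ρ(2) − 2ρ(4) + 3)·r_max = f_5(ρ'), and the objective of WQA(R, C'_6) satisfies f_6(ρ) = (2ρ(4) − ρ(1) − ρ(2) − 3)·r_min = f_6(ρ'). Hence both operators equalize ρ and ρ'. -/
import Mathlib

open scoped Classical

/-- The Copeland index of alternative `i` in a binary relation `r` on `Fin n`. -/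
noncomputable def copeland {n : ℕ} (r : Fin n → Fin n → Prop) (i : Fin n) : ℤ :=
  (({j | r i j} : Set (Fin n)).ncard : ℤ) - (({j | r j i} : Set (Fin n)).ncard : ℤ)

/-- A weak order: a complete and transitive binary relation. -/
def IsWeakOrder {n : ℕ} (r : Fin n → Fin n → Prop) : Prop :=
  (∀ i j, r i j ∨ r j i) ∧ Transitive r

set_option maxHeartbeats 1000000 in
/-- Auxiliary: a double sum against a matrix supported on six entries. -/
theorem sum_six_aux (n : ℕ) (R : Fin n → Fin n → ℝ) (a b c d : Fin n)
    (hab : a ≠ b) (hac : a ≠ c) (had : a ≠ d) (hbc : b ≠ c) (hbd : b ≠ d) (hcd : c ≠ d)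
    (hR0 : ∀ i j, ¬((i = a ∧ j = c) ∨ (i = c ∧ j = d) ∨ (i = b ∧ j = d) ∨
        (i = c ∧ j = a) ∨ (i = d ∧ j = c) ∨ (i = d ∧ j = b)) → R i j = 0)
    (g : Fin n → Fin n → ℝ) :
    ∑ i, ∑ j, R i j * g i j =
      R a c * g a c + R c d * g c d + R b d * g b d +
      R c a * g c a + R d c * g d c + R d b * g d b := by
  rw [← Finset.sum_product', Finset.univ_product_univ]
  have hsub : ({(a,c),(c,d),(b,d),(c,a),(d,c),(d,b)} : Finset (Fin n × Fin n)) ⊆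
      Finset.univ := Finset.subset_univ _
  have hz : ∀ x ∈ (Finset.univ : Finset (Fin n × Fin n)),
      x ∉ ({(a,c),(c,d),(b,d),(c,a),(d,c),(d,b)} : Finset (Fin n × Fin n)) →
      R x.1 x.2 * g x.1 x.2 = 0 := by
    intro x _ hx
    simp only [Finset.mem_insert, Finset.mem_singleton, Prod.ext_iff] at hx
    push_neg at hx
    rw [hR0 x.1 x.2 (by tauto)]
    ring
  rw [← Finset.sum_subset hsub hz]
  have h1 := hab.symm; have h2 := hac.symm; have h3 := had.symm
  have h4 := hbc.symm; have h5 := hbd.symm; have h6 := hcd.symm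
  simp [Finset.sum_insert, Finset.mem_insert, Prod.ext_iff,
    hab, hac, had, hbc, hbd, hcd, h1, h2, h3, h4, h5, h6]
  ring

theorem stmt13 (n : ℕ) (hn : 4 ≤ n) (rmin rmax : ℝ) (hr : rmin < rmax)
    (R : Fin n → Fin n → ℝ)
    (a b c d : Fin n) (ha : a.val = 0) (hb : b.val = 1) (hc : c.val = 2) (hd : d.val = 3)
    (hR1 : R a c = rmax) (hR2 : R c d = rmax) (hR3 : R b d = rmax)
    (hR4 : R c a = rmin) (hR5 : R d c = rmin) (hR6 : R d b = rmin)
    (hR0 : ∀ i j, ¬((i = a ∧ j = c) ∨ (i = c ∧ j = d) ∨ (i = b ∧ j = d) ∨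
        (i = c ∧ j = a) ∨ (i = d ∧ j = c) ∨ (i = d ∧ j = b)) → R i j = 0)
    (r r' : Fin n → Fin n → Prop) (hw : IsWeakOrder r) (hw' : IsWeakOrder r')
    (hord : copeland r a > copeland r b ∧ copeland r b > copeland r c ∧
      copeland r c > copeland r d)
    (hs1 : copeland r' a = copeland r b) (hs2 : copeland r' b = copeland r a)
    (hs3 : ∀ i, i ≠ a → i ≠ b → copeland r' i = copeland r i) :
    let f5 : (Fin n → Fin n → Prop) → ℝ := fun s =>
      ∑ i, ∑ j, R i j * max ((copeland s i : ℝ) - (copeland s j : ℝ) + 1) 0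
    let f6 : (Fin n → Fin n → Prop) → ℝ := fun s =>
      ∑ i, ∑ j, R i j * min ((copeland s i : ℝ) - (copeland s j : ℝ) - 1) 0
    f5 r = ((copeland r a : ℝ) + (copeland r b : ℝ) - 2 * (copeland r d : ℝ) + 3) * rmax ∧
    f5 r' = f5 r ∧
    f6 r = (2 * (copeland r d : ℝ) - (copeland r a : ℝ) - (copeland r b : ℝ) - 3) * rmin ∧
    f6 r' = f6 r := by
  intro f5 f6
  have hab : a ≠ b := by intro h; subst h; omega
  have hac : a ≠ c := by intro h; subst h; omega
  have had : a ≠ d := by intro h; subst h; omega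
  have hbc : b ≠ c := by intro h; subst h; omega
  have hbd : b ≠ d := by intro h; subst h; omega
  have hcd : c ≠ d := by intro h; subst h; omega
  have key := sum_six_aux n R a b c d hab hac had hbc hbd hcd hR0
  -- Copeland values
  set A := copeland r a with hA
  set B := copeland r b with hB
  set C := copeland r c with hC
  set D := copeland r d with hD
  obtain ⟨o1, o2, o3⟩ := hord
  have g1 : (B : ℝ) + 1 ≤ (A : ℝ) := by exact_mod_cast o1
  have g2 : (C : ℝ) + 1 ≤ (B : ℝ) := by exact_mod_cast o2
  have g3 : (D : ℝ) + 1 ≤ (C : ℝ) := by exact_mod_cast o3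
  have hc' : copeland r' c = C := hs3 c hac.symm hbc.symm
  have hd' : copeland r' d = D := hs3 d had.symm hbd.symm
  have e5 : f5 r = ((A : ℝ) + (B : ℝ) - 2 * (D : ℝ) + 3) * rmax := by
    show (∑ i, ∑ j, R i j * max ((copeland r i : ℝ) - (copeland r j : ℝ) + 1) 0) = _
    rw [key (fun i j => max ((copeland r i : ℝ) - (copeland r j : ℝ) + 1) 0)]
    simp only [← hA, ← hB, ← hC, ← hD, hR1, hR2, hR3, hR4, hR5, hR6]
    rw [max_eq_left (show (0:ℝ) ≤ (A:ℝ) - (C:ℝ) + 1 by linarith),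
        max_eq_left (show (0:ℝ) ≤ (C:ℝ) - (D:ℝ) + 1 by linarith),
        max_eq_left (show (0:ℝ) ≤ (B:ℝ) - (D:ℝ) + 1 by linarith),
        max_eq_right (show (C:ℝ) - (A:ℝ) + 1 ≤ 0 by linarith),
        max_eq_right (show (D:ℝ) - (C:ℝ) + 1 ≤ 0 by linarith),
        max_eq_right (show (D:ℝ) - (B:ℝ) + 1 ≤ 0 by linarith)]
    ring
  have e5' : f5 r' = ((A : ℝ) + (B : ℝ) - 2 * (D : ℝ) + 3) * rmax := by
    show (∑ i, ∑ j, R i j * max ((copeland r' i : ℝ) - (copeland r' j : ℝ) + 1) 0) = _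
    rw [key (fun i j => max ((copeland r' i : ℝ) - (copeland r' j : ℝ) + 1) 0)]
    simp only [hs1, hs2, hc', hd', hR1, hR2, hR3, hR4, hR5, hR6]
    rw [max_eq_left (show (0:ℝ) ≤ (B:ℝ) - (C:ℝ) + 1 by linarith),
        max_eq_left (show (0:ℝ) ≤ (C:ℝ) - (D:ℝ) + 1 by linarith),
        max_eq_left (show (0:ℝ) ≤ (A:ℝ) - (D:ℝ) + 1 by linarith),
        max_eq_right (show (C:ℝ) - (B:ℝ) + 1 ≤ 0 by linarith),
        max_eq_right (show (D:ℝ) - (C:ℝ) + 1 ≤ 0 by linarith),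
        max_eq_right (show (D:ℝ) - (A:ℝ) + 1 ≤ 0 by linarith)]
    ring
  have e6 : f6 r = (2 * (D : ℝ) - (A : ℝ) - (B : ℝ) - 3) * rmin := by
    show (∑ i, ∑ j, R i j * min ((copeland r i : ℝ) - (copeland r j : ℝ) - 1) 0) = _
    rw [key (fun i j => min ((copeland r i : ℝ) - (copeland r j : ℝ) - 1) 0)]
    simp only [← hA, ← hB, ← hC, ← hD, hR1, hR2, hR3, hR4, hR5, hR6]
    rw [min_eq_right (show (0:ℝ) ≤ (A:ℝ) - (C:ℝ) - 1 by linarith),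
        min_eq_right (show (0:ℝ) ≤ (C:ℝ) - (D:ℝ) - 1 by linarith),
        min_eq_right (show (0:ℝ) ≤ (B:ℝ) - (D:ℝ) - 1 by linarith),
        min_eq_left (show (C:ℝ) - (A:ℝ) - 1 ≤ 0 by linarith),
        min_eq_left (show (D:ℝ) - (C:ℝ) - 1 ≤ 0 by linarith),
        min_eq_left (show (D:ℝ) - (B:ℝ) - 1 ≤ 0 by linarith)]
    ring
  have e6' : f6 r' = (2 * (D : ℝ) - (A : ℝ) - (B : ℝ) - 3) * rmin := by
    show (∑ i, ∑ j, R i j * min ((copeland r' i : ℝ) - (copeland r' j : ℝ) - 1) 0) = _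
    rw [key (fun i j => min ((copeland r' i : ℝ) - (copeland r' j : ℝ) - 1) 0)]
    simp only [hs1, hs2, hc', hd', hR1, hR2, hR3, hR4, hR5, hR6]
    rw [min_eq_right (show (0:ℝ) ≤ (B:ℝ) - (C:ℝ) - 1 by linarith),
        min_eq_right (show (0:ℝ) ≤ (C:ℝ) - (D:ℝ) - 1 by linarith),
        min_eq_right (show (0:ℝ) ≤ (A:ℝ) - (D:ℝ) - 1 by linarith),
        min_eq_left (show (C:ℝ) - (B:ℝ) - 1 ≤ 0 by linarith),
        min_eq_left (show (D:ℝ) - (C:ℝ) - 1 ≤ 0 by linarith),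
        min_eq_left (show (D:ℝ) - (A:ℝ) - 1 ≤ 0 by linarith)]
    ring
  exact ⟨e5, e5'.trans e5.symm, e6, e6'.trans e6.symm⟩
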